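/- Let (Φ_u)_{u≥0} be bounded operators on 𝒞, let M > 0 and 0 < r < r₀ < 1 with ‖Φ_u‖ ≤ M / r₀^u for all u ≥ 0, and set R = 1/r. Then there exists a constant K > 0 such that for all sequences (f_v)_{v≥1} and (g_u)_{u≥1} in 𝒞 with Σ_{v=1}^∞ R^{2v} ‖f_v‖² < ∞ and Σ_{u=1}^∞ R^{2u} ‖g_u‖² < ∞, the double series Σ_{v=1}^∞ Σ_{u=1}^{v} ⟨Φ_{v−u} f_v, g_u⟩_𝒞 + Σ_{u=1}^∞ Σ_{v=1}^{u} ⟨Φ*_{u−v} f_v, g_u⟩_𝒞 converges absolutely and its modulus is at most K · (Σ_{v=1}^∞ R^{2v} ‖f_v‖²)^{1/2} · (Σ_{u=1}^∞ R^{2u} ‖g_u‖²)^{1/2}. -/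

import Mathlib

noncomputable section

/-- The inner product of the paper, linear in the first entry:
`⟨x, y⟩_𝒞 := ⟪y, x⟫` (Mathlib's inner product is conjugate-linear in the first entry). -/
def ip {C : Type*} [NormedAddCommGroup C] [InnerProductSpace ℂ C] (x y : C) : ℂ := inner ℂ y x

/-- Cauchy–Schwarz for infinite sums of nonnegative reals. -/
private lemma cs_tsum {a b : ℕ → ℝ} (ha0 : ∀ v, 0 ≤ a v) (hb0 : ∀ u, 0 ≤ b u)
    (ha : Summable fun v => a v ^ 2) (hb : Summable fun u => b u ^ 2) :
    Summable (fun u => a u * b u) ∧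
      ∑' u, a u * b u ≤ Real.sqrt (∑' v, a v ^ 2) * Real.sqrt (∑' u, b u ^ 2) := by
  have hsum : Summable (fun u => a u * b u) :=
    Summable.of_nonneg_of_le (fun u => mul_nonneg (ha0 u) (hb0 u))
      (fun u => by nlinarith [sq_nonneg (a u - b u)]) ((ha.add hb).mul_left (1 / 2))
  refine ⟨hsum, hsum.tsum_le_of_sum_le fun s => ?_⟩
  have h1 : (∑ u ∈ s, a u * b u) ^ 2 ≤ (∑ u ∈ s, a u ^ 2) * ∑ u ∈ s, b u ^ 2 :=
    Finset.sum_mul_sq_le_sq_mul_sq s a b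
  have h2 : ∑ u ∈ s, a u ^ 2 ≤ ∑' v, a v ^ 2 := ha.sum_le_tsum s (fun i _ => sq_nonneg _)
  have h3 : ∑ u ∈ s, b u ^ 2 ≤ ∑' v, b v ^ 2 := hb.sum_le_tsum s (fun i _ => sq_nonneg _)
  have hs0 : 0 ≤ ∑ u ∈ s, a u * b u :=
    Finset.sum_nonneg fun i _ => mul_nonneg (ha0 i) (hb0 i)
  have hbn : (0:ℝ) ≤ ∑' v, b v ^ 2 := tsum_nonneg fun i => sq_nonneg _
  have han : (0:ℝ) ≤ ∑' v, a v ^ 2 := tsum_nonneg fun i => sq_nonneg _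
  calc ∑ u ∈ s, a u * b u = Real.sqrt ((∑ u ∈ s, a u * b u) ^ 2) := (Real.sqrt_sq hs0).symm
    _ ≤ Real.sqrt ((∑' v, a v ^ 2) * ∑' v, b v ^ 2) := by
        apply Real.sqrt_le_sqrt
        refine h1.trans ?_
        exact mul_le_mul h2 h3 (Finset.sum_nonneg fun i _ => sq_nonneg _) han
    _ = _ := Real.sqrt_mul han _

/-- Schur-type bound for the triangular kernel `M q^(v-u) a_v b_u`. -/
private lemma triangle_bound {M q : ℝ} (hM : 0 ≤ M) (hq0 : 0 ≤ q) (hq1 : q < 1)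
    {a b : ℕ → ℝ} (ha0 : ∀ v, 0 ≤ a v) (hb0 : ∀ u, 0 ≤ b u)
    (ha : Summable fun v => a v ^ 2) (hb : Summable fun u => b u ^ 2) :
    Summable (fun p : ℕ × ℕ =>
        if p.2 ≤ p.1 then M * q ^ (p.1 - p.2) * (a p.1 * b p.2) else 0) ∧
      ∑' p : ℕ × ℕ, (if p.2 ≤ p.1 then M * q ^ (p.1 - p.2) * (a p.1 * b p.2) else 0)
        ≤ M / (1 - q) * (Real.sqrt (∑' v, a v ^ 2) * Real.sqrt (∑' u, b u ^ 2)) := by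
  set A := Real.sqrt (∑' v, a v ^ 2) with hA
  set B := Real.sqrt (∑' u, b u ^ 2) with hB
  have hA0 : 0 ≤ A := Real.sqrt_nonneg _
  have hB0 : 0 ≤ B := Real.sqrt_nonneg _
  set G : ℕ × ℕ → ℝ :=
    fun p => if p.2 ≤ p.1 then M * q ^ (p.1 - p.2) * (a p.1 * b p.2) else 0 with hG
  have hG0 : ∀ p, 0 ≤ G p := by
    intro p
    by_cases h : p.2 ≤ p.1
    · simp only [hG, if_pos h]
      have := ha0 p.1; have := hb0 p.2
      positivity
    · simp [hG, if_neg h]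
  -- shifted Cauchy–Schwarz
  have hshift : ∀ k : ℕ, Summable (fun u => a (u + k) * b u) ∧
      ∑' u, a (u + k) * b u ≤ A * B := by
    intro k
    have hinj : Function.Injective (fun u : ℕ => u + k) := add_left_injective k
    have ha' : Summable (fun u => a (u + k) ^ 2) := ha.comp_injective hinj
    obtain ⟨hs, hle⟩ := cs_tsum (fun u => ha0 _) hb0 ha' hb
    refine ⟨hs, hle.trans ?_⟩
    have h1 : ∑' u, a (u + k) ^ 2 ≤ ∑' v, a v ^ 2 :=
      ha'.tsum_le_tsum_of_inj _ hinj (fun i _ => sq_nonneg _) (fun u => le_rfl) ha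
    exact mul_le_mul_of_nonneg_right (Real.sqrt_le_sqrt h1) hB0
  set F : ℕ × ℕ → ℝ := fun p => M * q ^ p.1 * (a (p.2 + p.1) * b p.2) with hF
  have hF0 : ∀ p, 0 ≤ F p := by
    intro p
    have := ha0 (p.2 + p.1); have := hb0 p.2
    simp only [hF]; positivity
  have hFrow : ∀ k, Summable fun u => F (k, u) := by
    intro k
    exact ((hshift k).1.mul_left (M * q ^ k))
  have hFsum : ∀ k, ∑' u, F (k, u) ≤ M * q ^ k * (A * B) := by
    intro k
    simp only [hF]
    rw [tsum_mul_left]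
    have h0 : 0 ≤ M * q ^ k := by positivity
    exact mul_le_mul_of_nonneg_left (hshift k).2 h0
  have hgeom : Summable fun k : ℕ => M * q ^ k * (A * B) := by
    have := (summable_geometric_of_lt_one hq0 hq1).mul_left (M * (A * B))
    refine this.congr fun k => by ring
  have hFcol : Summable fun k => ∑' u, F (k, u) :=
    Summable.of_nonneg_of_le (fun k => tsum_nonneg fun u => hF0 (k, u)) hFsum hgeom
  have hFsummable : Summable F :=
    (summable_prod_of_nonneg hF0).mpr ⟨hFrow, hFcol⟩
  set e : ℕ × ℕ → ℕ × ℕ := fun p => (p.2 + p.1, p.2) with he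
  have heinj : Function.Injective e := by
    rintro ⟨k, u⟩ ⟨k', u'⟩ h
    simp only [he, Prod.mk.injEq] at h
    obtain ⟨h1, h2⟩ := h
    subst h2
    exact Prod.ext (by omega) rfl
  have hGe : ∀ p, G (e p) = F p := by
    rintro ⟨k, u⟩
    simp only [he, hG, hF, Nat.le_add_right u k, if_pos, Nat.add_sub_cancel_left]
  have hGsupp : Function.support G ⊆ Set.range e := by
    intro p hp
    rcases le_or_gt p.2 p.1 with h | h
    · exact ⟨(p.1 - p.2, p.2), by simp [he, Nat.add_sub_cancel' h]⟩
    · exfalso; apply hp; simp [hG, if_neg (not_le.mpr h)]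
  have hGsummable : Summable G := by
    rw [← heinj.summable_iff (fun x hx => by
      by_contra h0
      exact hx (hGsupp h0))]
    exact hFsummable.congr fun p => (hGe p).symm
  refine ⟨hGsummable, ?_⟩
  have h1q : 0 < 1 - q := by linarith
  calc ∑' p, G p = ∑' p, F p := by
        rw [← heinj.tsum_eq hGsupp]
        exact tsum_congr hGe
    _ = ∑' k, ∑' u, F (k, u) := hFsummable.tsum_prod' hFrow
    _ ≤ ∑' k, M * q ^ k * (A * B) :=
        hFcol.tsum_le_tsum hFsum hgeom
    _ = M * (A * B) * ∑' k : ℕ, q ^ k := by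
        rw [← tsum_mul_left]
        exact tsum_congr fun k => by ring
    _ = M / (1 - q) * (A * B) := by
        rw [tsum_geometric_of_lt_one hq0 hq1]
        field_simp

theorem statement9 {C : Type*} [NormedAddCommGroup C] [InnerProductSpace ℂ C] [CompleteSpace C]
    (Φc : ℕ → C →L[ℂ] C) (M r r₀ R : ℝ)
    (hM : 0 < M) (hr0 : 0 < r) (hrr0 : r < r₀) (hr01 : r₀ < 1) (hR : R = 1 / r)
    (hΦ : ∀ u : ℕ, ‖Φc u‖ ≤ M / r₀ ^ u) :
    ∃ K > 0, ∀ f g : ℕ → C,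
      (Summable fun v : ℕ => R ^ (2 * (v + 1)) * ‖f v‖ ^ 2) →
      (Summable fun u : ℕ => R ^ (2 * (u + 1)) * ‖g u‖ ^ 2) →
      (Summable fun v : ℕ =>
          ∑ u ∈ Finset.range (v + 1), ‖ip (Φc (v - u) (f v)) (g u)‖) ∧
      (Summable fun u : ℕ =>
          ∑ v ∈ Finset.range (u + 1),
            ‖ip (ContinuousLinearMap.adjoint (Φc (u - v)) (f v)) (g u)‖) ∧
      ‖(∑' v : ℕ, ∑ u ∈ Finset.range (v + 1), ip (Φc (v - u) (f v)) (g u))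
            + ∑' u : ℕ, ∑ v ∈ Finset.range (u + 1),
                ip (ContinuousLinearMap.adjoint (Φc (u - v)) (f v)) (g u)‖
        ≤ K * Real.sqrt (∑' v : ℕ, R ^ (2 * (v + 1)) * ‖f v‖ ^ 2) *
            Real.sqrt (∑' u : ℕ, R ^ (2 * (u + 1)) * ‖g u‖ ^ 2) := by
  have hr₀0 : 0 < r₀ := hr0.trans hrr0
  have hr1 : r < 1 := hrr0.trans hr01
  set q := r / r₀ with hqdef
  have hq0 : 0 ≤ q := by positivity
  have hq1 : q < 1 := (div_lt_one hr₀0).mpr hrr0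
  have h1q : 0 < 1 - q := by linarith
  have hR0 : 0 < R := by rw [hR]; positivity
  have hR1 : 1 ≤ R := by
    rw [hR]
    rw [le_div_iff₀ hr0]
    linarith
  have hqR : q * R = 1 / r₀ := by
    rw [hqdef, hR]
    field_simp
  refine ⟨2 * M / (1 - q), by positivity, ?_⟩
  intro f g hf hg
  set a : ℕ → ℝ := fun v => R ^ (v + 1) * ‖f v‖ with hadef
  set b : ℕ → ℝ := fun u => R ^ (u + 1) * ‖g u‖ with hbdef
  have ha0 : ∀ v, 0 ≤ a v := fun v => mul_nonneg (pow_nonneg hR0.le _) (norm_nonneg _)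
  have hb0 : ∀ u, 0 ≤ b u := fun u => mul_nonneg (pow_nonneg hR0.le _) (norm_nonneg _)
  have hsqa : ∀ v, a v ^ 2 = R ^ (2 * (v + 1)) * ‖f v‖ ^ 2 := by
    intro v
    simp only [hadef]
    rw [mul_pow, ← pow_mul, Nat.mul_comm]
  have hsqb : ∀ u, b u ^ 2 = R ^ (2 * (u + 1)) * ‖g u‖ ^ 2 := by
    intro u
    simp only [hbdef]
    rw [mul_pow, ← pow_mul, Nat.mul_comm]
  have ha : Summable fun v => a v ^ 2 := hf.congr fun v => (hsqa v).symm
  have hb : Summable fun u => b u ^ 2 := hg.congr fun u => (hsqb u).symm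
  have hAeq : Real.sqrt (∑' v, a v ^ 2)
      = Real.sqrt (∑' v : ℕ, R ^ (2 * (v + 1)) * ‖f v‖ ^ 2) := by
    rw [tsum_congr hsqa]
  have hBeq : Real.sqrt (∑' u, b u ^ 2)
      = Real.sqrt (∑' u : ℕ, R ^ (2 * (u + 1)) * ‖g u‖ ^ 2) := by
    rw [tsum_congr hsqb]
  set A := Real.sqrt (∑' v, a v ^ 2) with hA
  set B := Real.sqrt (∑' u, b u ^ 2) with hB
  have hA0 : 0 ≤ A := Real.sqrt_nonneg _
  have hB0 : 0 ≤ B := Real.sqrt_nonneg _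
  -- key exponent estimate
  have key : ∀ u k : ℕ, (1 : ℝ) / r₀ ^ k ≤ q ^ k * (R ^ (u + k + 1) * R ^ (u + 1)) := by
    intro u k
    have hqRk : (1 : ℝ) / r₀ ^ k = q ^ k * R ^ k := by
      rw [← mul_pow, hqR, div_pow, one_pow]
    have hRu : (1 : ℝ) ≤ R ^ (u + 1) := one_le_pow₀ hR1
    calc (1 : ℝ) / r₀ ^ k = q ^ k * R ^ k * 1 := by rw [hqRk, mul_one]
      _ ≤ q ^ k * R ^ k * (R ^ (u + 1) * R ^ (u + 1)) := by
          have h0 : (0:ℝ) ≤ q ^ k * R ^ k := by positivity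
          have : (1:ℝ) ≤ R ^ (u + 1) * R ^ (u + 1) := by nlinarith
          exact mul_le_mul_of_nonneg_left this h0
      _ = q ^ k * (R ^ (u + k + 1) * R ^ (u + 1)) := by ring
  -- pointwise bound for the first family
  have claim1 : ∀ v u : ℕ, u ≤ v →
      ‖ip (Φc (v - u) (f v)) (g u)‖ ≤ M * q ^ (v - u) * (a v * b u) := by
    intro v u huv
    obtain ⟨k, rfl⟩ := Nat.exists_eq_add_of_le huv
    rw [Nat.add_sub_cancel_left]
    have hb1 : ‖ip (Φc k (f (u + k))) (g u)‖ ≤ (M / r₀ ^ k) * (‖f (u + k)‖ * ‖g u‖) := by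
      unfold ip
      refine (norm_inner_le_norm _ _).trans ?_
      calc ‖g u‖ * ‖Φc k (f (u + k))‖ ≤ ‖g u‖ * (‖Φc k‖ * ‖f (u + k)‖) := by
            exact mul_le_mul_of_nonneg_left ((Φc k).le_opNorm _) (norm_nonneg _)
        _ ≤ ‖g u‖ * ((M / r₀ ^ k) * ‖f (u + k)‖) := by
            gcongr
            exact hΦ k
        _ = (M / r₀ ^ k) * (‖f (u + k)‖ * ‖g u‖) := by ring
    refine hb1.trans ?_
    have expand : M * q ^ k * (a (u + k) * b u)
        = M * (q ^ k * (R ^ (u + k + 1) * R ^ (u + 1))) * (‖f (u + k)‖ * ‖g u‖) := by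
      simp only [hadef, hbdef]; ring
    have lhs : M / r₀ ^ k * (‖f (u + k)‖ * ‖g u‖)
        = M * ((1:ℝ) / r₀ ^ k) * (‖f (u + k)‖ * ‖g u‖) := by ring
    rw [expand, lhs]
    have h0 : (0:ℝ) ≤ ‖f (u + k)‖ * ‖g u‖ := by positivity
    exact mul_le_mul_of_nonneg_right
      (mul_le_mul_of_nonneg_left (key u k) hM.le) h0
  -- pointwise bound for the second family
  have claim2 : ∀ u v : ℕ, v ≤ u →
      ‖ip (ContinuousLinearMap.adjoint (Φc (u - v)) (f v)) (g u)‖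
        ≤ M * q ^ (u - v) * (b u * a v) := by
    intro u v hvu
    obtain ⟨k, rfl⟩ := Nat.exists_eq_add_of_le hvu
    rw [Nat.add_sub_cancel_left]
    have hadj : ‖ContinuousLinearMap.adjoint (Φc k)‖ = ‖Φc k‖ :=
      ContinuousLinearMap.adjoint.norm_map (Φc k)
    have hb1 : ‖ip (ContinuousLinearMap.adjoint (Φc k) (f v)) (g (v + k))‖
        ≤ (M / r₀ ^ k) * (‖f v‖ * ‖g (v + k)‖) := by
      unfold ip
      refine (norm_inner_le_norm _ _).trans ?_
      calc ‖g (v + k)‖ * ‖ContinuousLinearMap.adjoint (Φc k) (f v)‖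
          ≤ ‖g (v + k)‖ * (‖Φc k‖ * ‖f v‖) := by
            refine mul_le_mul_of_nonneg_left ?_ (norm_nonneg _)
            have := (ContinuousLinearMap.adjoint (Φc k)).le_opNorm (f v)
            rwa [hadj] at this
        _ ≤ ‖g (v + k)‖ * ((M / r₀ ^ k) * ‖f v‖) := by
            gcongr
            exact hΦ k
        _ = (M / r₀ ^ k) * (‖f v‖ * ‖g (v + k)‖) := by ring
    refine hb1.trans ?_
    have expand : M * q ^ k * (b (v + k) * a v)
        = M * (q ^ k * (R ^ (v + k + 1) * R ^ (v + 1))) * (‖f v‖ * ‖g (v + k)‖) := by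
      simp only [hadef, hbdef]; ring
    have lhs : M / r₀ ^ k * (‖f v‖ * ‖g (v + k)‖)
        = M * ((1:ℝ) / r₀ ^ k) * (‖f v‖ * ‖g (v + k)‖) := by ring
    rw [expand, lhs]
    have h0 : (0:ℝ) ≤ ‖f v‖ * ‖g (v + k)‖ := by positivity
    exact mul_le_mul_of_nonneg_right
      (mul_le_mul_of_nonneg_left (key v k) hM.le) h0
  -- triangular kernels
  obtain ⟨hG1sum, hG1le⟩ := triangle_bound hM.le hq0 hq1 ha0 hb0 ha hb
  obtain ⟨hG2sum, hG2le⟩ := triangle_bound hM.le hq0 hq1 hb0 ha0 hb ha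
  set G1 : ℕ × ℕ → ℝ :=
    fun p => if p.2 ≤ p.1 then M * q ^ (p.1 - p.2) * (a p.1 * b p.2) else 0 with hG1
  set G2 : ℕ × ℕ → ℝ :=
    fun p => if p.2 ≤ p.1 then M * q ^ (p.1 - p.2) * (b p.1 * a p.2) else 0 with hG2
  have hG10 : ∀ p, 0 ≤ G1 p := by
    intro p; by_cases h : p.2 ≤ p.1
    · simp only [hG1, if_pos h]
      have := ha0 p.1; have := hb0 p.2; positivity
    · simp [hG1, if_neg h]
  have hG20 : ∀ p, 0 ≤ G2 p := by
    intro p; by_cases h : p.2 ≤ p.1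
    · simp only [hG2, if_pos h]
      have := hb0 p.1; have := ha0 p.2; positivity
    · simp [hG2, if_neg h]
  obtain ⟨hG1rows, hG1cols⟩ := (summable_prod_of_nonneg hG10).mp hG1sum
  obtain ⟨hG2rows, hG2cols⟩ := (summable_prod_of_nonneg hG20).mp hG2sum
  -- finite row sums equal tsums
  have hrow1 : ∀ v : ℕ, ∑ u ∈ Finset.range (v + 1), G1 (v, u) = ∑' u, G1 (v, u) := by
    intro v
    refine (tsum_eq_sum ?_).symm
    intro u hu
    have : ¬ u ≤ v := by
      simp only [Finset.mem_range] at hu; omega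
    simp [hG1, if_neg this]
  have hrow2 : ∀ u : ℕ, ∑ v ∈ Finset.range (u + 1), G2 (u, v) = ∑' v, G2 (u, v) := by
    intro u
    refine (tsum_eq_sum ?_).symm
    intro v hv
    have : ¬ v ≤ u := by
      simp only [Finset.mem_range] at hv; omega
    simp [hG2, if_neg this]
  -- bound the finite sums of norms by the kernel row sums
  have hbound1 : ∀ v : ℕ, ∑ u ∈ Finset.range (v + 1), ‖ip (Φc (v - u) (f v)) (g u)‖
      ≤ ∑' u, G1 (v, u) := by
    intro v
    rw [← hrow1 v]
    refine Finset.sum_le_sum fun u hu => ?_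
    have huv : u ≤ v := by simp only [Finset.mem_range] at hu; omega
    have := claim1 v u huv
    simpa [hG1, if_pos huv] using this
  have hbound2 : ∀ u : ℕ, ∑ v ∈ Finset.range (u + 1),
      ‖ip (ContinuousLinearMap.adjoint (Φc (u - v)) (f v)) (g u)‖ ≤ ∑' v, G2 (u, v) := by
    intro u
    rw [← hrow2 u]
    refine Finset.sum_le_sum fun v hv => ?_
    have hvu : v ≤ u := by simp only [Finset.mem_range] at hv; omega
    have := claim2 u v hvu
    simpa [hG2, if_pos hvu] using this
  have hnn1 : ∀ v : ℕ, 0 ≤ ∑ u ∈ Finset.range (v + 1), ‖ip (Φc (v - u) (f v)) (g u)‖ :=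
    fun v => Finset.sum_nonneg fun u _ => norm_nonneg _
  have hnn2 : ∀ u : ℕ, 0 ≤ ∑ v ∈ Finset.range (u + 1),
      ‖ip (ContinuousLinearMap.adjoint (Φc (u - v)) (f v)) (g u)‖ :=
    fun u => Finset.sum_nonneg fun v _ => norm_nonneg _
  have hsum1 : Summable fun v : ℕ =>
      ∑ u ∈ Finset.range (v + 1), ‖ip (Φc (v - u) (f v)) (g u)‖ :=
    Summable.of_nonneg_of_le hnn1 hbound1 hG1cols
  have hsum2 : Summable fun u : ℕ => ∑ v ∈ Finset.range (u + 1),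
      ‖ip (ContinuousLinearMap.adjoint (Φc (u - v)) (f v)) (g u)‖ :=
    Summable.of_nonneg_of_le hnn2 hbound2 hG2cols
  refine ⟨hsum1, hsum2, ?_⟩
  -- total tsum bounds
  have ht1 : ∑' v, ∑ u ∈ Finset.range (v + 1), ‖ip (Φc (v - u) (f v)) (g u)‖
      ≤ M / (1 - q) * (A * B) := by
    calc ∑' v, ∑ u ∈ Finset.range (v + 1), ‖ip (Φc (v - u) (f v)) (g u)‖
        ≤ ∑' v, ∑' u, G1 (v, u) := hsum1.tsum_le_tsum hbound1 hG1cols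
      _ = ∑' p, G1 p := (hG1sum.tsum_prod' hG1rows).symm
      _ ≤ M / (1 - q) * (A * B) := hG1le
  have ht2 : ∑' u, ∑ v ∈ Finset.range (u + 1),
      ‖ip (ContinuousLinearMap.adjoint (Φc (u - v)) (f v)) (g u)‖
      ≤ M / (1 - q) * (A * B) := by
    calc ∑' u, ∑ v ∈ Finset.range (u + 1),
          ‖ip (ContinuousLinearMap.adjoint (Φc (u - v)) (f v)) (g u)‖
        ≤ ∑' u, ∑' v, G2 (u, v) := hsum2.tsum_le_tsum hbound2 hG2cols
      _ = ∑' p, G2 p := (hG2sum.tsum_prod' hG2rows).symm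
      _ ≤ M / (1 - q) * (B * A) := hG2le
      _ = M / (1 - q) * (A * B) := by ring
  -- norms of the complex partial sums
  have hns1 : Summable fun v : ℕ =>
      ‖∑ u ∈ Finset.range (v + 1), ip (Φc (v - u) (f v)) (g u)‖ :=
    Summable.of_nonneg_of_le (fun v => norm_nonneg _)
      (fun v => norm_sum_le _ _) hsum1
  have hns2 : Summable fun u : ℕ =>
      ‖∑ v ∈ Finset.range (u + 1), ip (ContinuousLinearMap.adjoint (Φc (u - v)) (f v)) (g u)‖ :=
    Summable.of_nonneg_of_le (fun u => norm_nonneg _)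
      (fun u => norm_sum_le _ _) hsum2
  rw [← hAeq, ← hBeq]
  calc ‖(∑' v : ℕ, ∑ u ∈ Finset.range (v + 1), ip (Φc (v - u) (f v)) (g u))
        + ∑' u : ℕ, ∑ v ∈ Finset.range (u + 1),
            ip (ContinuousLinearMap.adjoint (Φc (u - v)) (f v)) (g u)‖
      ≤ ‖∑' v : ℕ, ∑ u ∈ Finset.range (v + 1), ip (Φc (v - u) (f v)) (g u)‖
        + ‖∑' u : ℕ, ∑ v ∈ Finset.range (u + 1),
            ip (ContinuousLinearMap.adjoint (Φc (u - v)) (f v)) (g u)‖ := norm_add_le _ _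
    _ ≤ (∑' v : ℕ, ‖∑ u ∈ Finset.range (v + 1), ip (Φc (v - u) (f v)) (g u)‖)
        + ∑' u : ℕ, ‖∑ v ∈ Finset.range (u + 1),
            ip (ContinuousLinearMap.adjoint (Φc (u - v)) (f v)) (g u)‖ := by
        exact add_le_add (norm_tsum_le_tsum_norm hns1) (norm_tsum_le_tsum_norm hns2)
    _ ≤ (∑' v : ℕ, ∑ u ∈ Finset.range (v + 1), ‖ip (Φc (v - u) (f v)) (g u)‖)
        + ∑' u : ℕ, ∑ v ∈ Finset.range (u + 1),
            ‖ip (ContinuousLinearMap.adjoint (Φc (u - v)) (f v)) (g u)‖ := by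
        exact add_le_add
          (hns1.tsum_le_tsum (fun v => norm_sum_le _ _) hsum1)
          (hns2.tsum_le_tsum (fun u => norm_sum_le _ _) hsum2)
    _ ≤ M / (1 - q) * (A * B) + M / (1 - q) * (A * B) := add_le_add ht1 ht2
    _ = 2 * M / (1 - q) * A * B := by ring

end
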